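/- The expected number of pure Nash equilibria in an N-player binary-action game with i.i.d. payoffs equals 2^N (1 - β)^N = (1 + α)^N, where α = P(Z₁ = Z₂) and β = (1-α)/2. -/

import Mathlib

open MeasureTheory ProbabilityTheory
open scoped Classical

lemma meas_biInter_le_eq_prod {Ω : Type*} [MeasurableSpace Ω] (μ : Measure Ω)
    [IsProbabilityMeasure μ] {ι : Type*} {n : ℕ} (Z : ι → Ω → ℝ)
    (hmeas : ∀ p, Measurable (Z p))
    (hindep : iIndepFun Z μ)
    (p q : Fin n → ι)
    (hdisj : ∀ i j, i ≠ j → p i ≠ p j ∧ p i ≠ q j ∧ q i ≠ p j ∧ q i ≠ q j)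
    (t : Finset (Fin n)) :
    μ (⋂ i ∈ t, {ω | Z (p i) ω ≤ Z (q i) ω})
      = ∏ i ∈ t, μ {ω | Z (p i) ω ≤ Z (q i) ω} := by
  classical
  induction t using Finset.induction_on with
  | empty => simp
  | @insert j t hj ih =>
    rw [Finset.set_biInter_insert, Finset.prod_insert hj, ← ih]
    set S : Finset ι := {p j, q j} with hS
    set T : Finset ι := t.biUnion (fun i => {p i, q i}) with hT
    have hST : Disjoint S T := by
      rw [hT, Finset.disjoint_biUnion_right]
      intro i hi
      obtain ⟨h1, h2, h3, h4⟩ := hdisj j i (fun h => hj (h ▸ hi))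
      rw [Finset.disjoint_left]
      intro a ha hb
      simp only [hS, Finset.mem_insert, Finset.mem_singleton] at ha hb
      rcases ha with h | h <;> rcases hb with h' | h' <;> subst h <;>
        [exact h1 h'; exact h2 h'; exact h3 h'; exact h4 h']
    have hIF := hindep.indepFun_finset S T hST hmeas
    have hpjS : p j ∈ S := by simp [hS]
    have hqjS : q j ∈ S := by simp [hS]
    have hpT : ∀ i ∈ t, p i ∈ T := fun i hi => Finset.mem_biUnion.2 ⟨i, hi, by simp⟩
    have hqT : ∀ i ∈ t, q i ∈ T := fun i hi => Finset.mem_biUnion.2 ⟨i, hi, by simp⟩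
    set B : Set ((x : S) → ℝ) := {x | x ⟨p j, hpjS⟩ ≤ x ⟨q j, hqjS⟩} with hB
    set C : Set ((x : T) → ℝ) :=
      ⋂ i, ⋂ (h : i ∈ t), {x | x ⟨p i, hpT i h⟩ ≤ x ⟨q i, hqT i h⟩} with hC
    have hBm : MeasurableSet B :=
      measurableSet_le (measurable_pi_apply _) (measurable_pi_apply _)
    have hCm : MeasurableSet C :=
      MeasurableSet.iInter fun i => MeasurableSet.iInter fun h =>
        measurableSet_le (measurable_pi_apply _) (measurable_pi_apply _)
    have key := hIF.measure_inter_preimage_eq_mul B C hBm hCm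
    have e1 : (fun a (x : S) => Z x a) ⁻¹' B = {ω | Z (p j) ω ≤ Z (q j) ω} := rfl
    have e2 : (fun a (x : T) => Z x a) ⁻¹' C = ⋂ i ∈ t, {ω | Z (p i) ω ≤ Z (q i) ω} := by
      ext ω
      simp [hC, Set.mem_iInter]
    rw [e1, e2] at key
    exact key

/-- The expected number of pure Nash equilibria equals
`2^N (1-β)^N = (1+α)^N`, where `α = P(Z₁ = Z₂)` and `β = (1-α)/2`. -/
theorem expected_number_PNE (Ω : Type*) [MeasurableSpace Ω] (μ : Measure Ω)
    [IsProbabilityMeasure μ] (N : ℕ)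
    (Z : (Fin N × (Fin N → Bool)) → Ω → ℝ)
    (hmeas : ∀ p, Measurable (Z p))
    (hindep : iIndepFun Z μ)
    (hident : ∀ p q, IdentDistrib (Z p) (Z q) μ μ)
    (α β : ℝ) (hβα : β = (1 - α) / 2)
    (hαZ : ∀ p q, p ≠ q → μ {ω | Z p ω = Z q ω} = ENNReal.ofReal α)
    (hβZ : ∀ p q, p ≠ q → μ {ω | Z p ω < Z q ω} = ENNReal.ofReal β)
    (card𝒩 : Ω → ℕ)
    (hcard : ∀ ω, card𝒩 ω = (Finset.univ.filter
      (fun s : Fin N → Bool =>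
        ∀ i : Fin N, Z (i, Function.update s i (!s i)) ω ≤ Z (i, s) ω)).card) :
    ∫ ω, (card𝒩 ω : ℝ) ∂μ = (1 + α) ^ N ∧
      ((1 : ℝ) + α) ^ N = 2 ^ N * (1 - β) ^ N := by
  classical
  set upd : (Fin N → Bool) → Fin N → (Fin N → Bool) :=
    fun s i => Function.update s i (!s i) with hupd
  set A : (Fin N → Bool) → Fin N → Set Ω :=
    fun s i => {ω | Z (i, upd s i) ω ≤ Z (i, s) ω} with hA
  have hAm : ∀ s i, MeasurableSet (A s i) := fun s i =>
    measurableSet_le (hmeas _) (hmeas _)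
  set Es : (Fin N → Bool) → Set Ω := fun s => ⋂ i, A s i with hEs
  have hEsm : ∀ s, MeasurableSet (Es s) := fun s => MeasurableSet.iInter (hAm s)
  -- the counting function as a sum of indicators
  have hcard' : ∀ ω, (card𝒩 ω : ℝ)
      = ∑ s : Fin N → Bool, (Es s).indicator (fun _ => (1 : ℝ)) ω := by
    intro ω
    rw [hcard, Finset.card_filter]
    push_cast
    refine Finset.sum_congr rfl fun s _ => ?_
    by_cases h : ω ∈ Es s
    · have h' : ∀ i : Fin N, Z (i, upd s i) ω ≤ Z (i, s) ω := by
        simpa [hEs, hA, Set.mem_iInter] using h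
      simp [Set.indicator_apply, h, h']
      exact h'
    · have h' : ¬ ∀ i : Fin N, Z (i, upd s i) ω ≤ Z (i, s) ω := by
        simpa [hEs, hA, Set.mem_iInter] using h
      simp [Set.indicator_apply, h, h']
      push_neg at h'
      exact h'
  -- expected value as a sum of measures
  have hI : ∫ ω, (card𝒩 ω : ℝ) ∂μ = ∑ s : Fin N → Bool, (μ (Es s)).toReal := by
    rw [MeasureTheory.integral_congr_ae (Filter.Eventually.of_forall hcard'),
      MeasureTheory.integral_finset_sum _
        (fun s _ => (integrable_const (1 : ℝ)).indicator (hEsm s))]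
    refine Finset.sum_congr rfl fun s _ => ?_
    rw [MeasureTheory.integral_indicator (hEsm s), MeasureTheory.setIntegral_const,
      smul_eq_mul, mul_one]
    rfl
  -- independence: the measure of each NE event is a product
  have hprod : ∀ s : Fin N → Bool, μ (Es s) = ∏ i : Fin N, μ (A s i) := by
    intro s
    have hdisj : ∀ i j : Fin N, i ≠ j →
        ((i, upd s i) : Fin N × (Fin N → Bool)) ≠ (j, upd s j) ∧
        ((i, upd s i) : Fin N × (Fin N → Bool)) ≠ (j, s) ∧
        ((i, s) : Fin N × (Fin N → Bool)) ≠ (j, upd s j) ∧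
        ((i, s) : Fin N × (Fin N → Bool)) ≠ (j, s) := by
      intro i j hij
      refine ⟨?_, ?_, ?_, ?_⟩ <;> exact fun h => hij (congrArg Prod.fst h)
    have := meas_biInter_le_eq_prod μ Z hmeas hindep
      (fun i => (i, upd s i)) (fun i => (i, s)) hdisj Finset.univ
    simpa [hEs, hA, Set.mem_iInter] using this
  -- each pair (i, upd s i) ≠ (i, s)
  have hne : ∀ (s : Fin N → Bool) (i : Fin N),
      ((i, upd s i) : Fin N × (Fin N → Bool)) ≠ (i, s) := by
    intro s i h
    have := congrArg (fun r : Fin N × (Fin N → Bool) => r.2 i) h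
    simp [hupd, Function.update_self] at this
  -- measure of each best-response event
  have hAval : ∀ s i, μ (A s i) = ENNReal.ofReal β + ENNReal.ofReal α := by
    intro s i
    have hsplit : A s i = {ω | Z (i, upd s i) ω < Z (i, s) ω}
        ∪ {ω | Z (i, upd s i) ω = Z (i, s) ω} := by
      ext ω
      simp only [hA, Set.mem_setOf_eq, Set.mem_union]
      exact le_iff_lt_or_eq
    have hd : Disjoint {ω | Z (i, upd s i) ω < Z (i, s) ω}
        {ω | Z (i, upd s i) ω = Z (i, s) ω} := by
      rw [Set.disjoint_left]
      intro ω h1 h2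
      exact absurd h2 (ne_of_lt h1)
    rw [hsplit, measure_union hd (measurableSet_eq_fun (hmeas _) (hmeas _)),
      hβZ _ _ (hne s i), hαZ _ _ (hne s i)]
  -- second claim, purely algebraic
  have halg : ((1 : ℝ) + α) ^ N = 2 ^ N * (1 - β) ^ N := by
    rw [hβα, ← mul_pow]
    ring_nf
  refine ⟨?_, halg⟩
  rcases Nat.eq_zero_or_pos N with hN | hN
  · subst hN
    rw [hI]
    simp [hprod]
  -- N ≥ 1 : show 0 ≤ α and 0 ≤ β
  · have i0 : Fin N := ⟨0, hN⟩
    set s0 : Fin N → Bool := fun _ => false with hs0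
    set p0 : Fin N × (Fin N → Bool) := (i0, upd s0 i0) with hp0
    set q0 : Fin N × (Fin N → Bool) := (i0, s0) with hq0
    have hpq : p0 ≠ q0 := hne s0 i0
    have hqp : q0 ≠ p0 := fun h => hpq h.symm
    have hsplit : μ {ω | Z p0 ω < Z q0 ω} + μ {ω | Z p0 ω = Z q0 ω}
        + μ {ω | Z q0 ω < Z p0 ω} = 1 := by
      have hun : {ω | Z p0 ω < Z q0 ω} ∪ ({ω | Z p0 ω = Z q0 ω}
          ∪ {ω | Z q0 ω < Z p0 ω}) = Set.univ := by
        ext ω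
        simp only [Set.mem_union, Set.mem_setOf_eq, Set.mem_univ, iff_true]
        exact lt_trichotomy _ _
      have hd1 : Disjoint {ω | Z p0 ω = Z q0 ω} {ω | Z q0 ω < Z p0 ω} := by
        rw [Set.disjoint_left]; intro ω h1 h2; exact absurd h1.symm (ne_of_lt h2)
      have hd2 : Disjoint {ω | Z p0 ω < Z q0 ω}
          ({ω | Z p0 ω = Z q0 ω} ∪ {ω | Z q0 ω < Z p0 ω}) := by
        rw [Set.disjoint_left]; intro ω h1 h2
        simp only [Set.mem_union, Set.mem_setOf_eq] at h1 h2
        rcases h2 with h2 | h2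
        · exact absurd h2 (ne_of_lt h1)
        · exact lt_asymm h1 h2
      calc μ {ω | Z p0 ω < Z q0 ω} + μ {ω | Z p0 ω = Z q0 ω} + μ {ω | Z q0 ω < Z p0 ω}
          = μ {ω | Z p0 ω < Z q0 ω} + (μ {ω | Z p0 ω = Z q0 ω}
            + μ {ω | Z q0 ω < Z p0 ω}) := add_assoc _ _ _
        _ = μ {ω | Z p0 ω < Z q0 ω} + μ ({ω | Z p0 ω = Z q0 ω}
            ∪ {ω | Z q0 ω < Z p0 ω}) := by
            rw [measure_union hd1 (measurableSet_lt (hmeas _) (hmeas _))]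
        _ = μ ({ω | Z p0 ω < Z q0 ω} ∪ ({ω | Z p0 ω = Z q0 ω}
            ∪ {ω | Z q0 ω < Z p0 ω})) := by
            rw [measure_union hd2 ((measurableSet_eq_fun (hmeas _) (hmeas _)).union
              (measurableSet_lt (hmeas _) (hmeas _)))]
        _ = 1 := by rw [hun, measure_univ]
    rw [hβZ _ _ hpq, hαZ _ _ hpq, hβZ _ _ hqp] at hsplit
    have hr : max β 0 + max α 0 + max β 0 = 1 := by
      have h2 := congrArg ENNReal.toReal hsplit
      rw [ENNReal.toReal_add (by finiteness) (by finiteness),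
        ENNReal.toReal_add (by finiteness) (by finiteness)] at h2
      simp only [ENNReal.toReal_ofReal', ENNReal.toReal_one] at h2
      exact h2
    have hα0 : 0 ≤ α := by
      by_contra h
      push_neg at h
      have hβpos : 0 < β := by rw [hβα]; linarith
      rw [max_eq_left hβpos.le, max_eq_right h.le] at hr
      linarith
    have hβ0 : 0 ≤ β := by
      by_contra h
      push_neg at h
      rw [max_eq_left hα0, max_eq_right h.le] at hr
      rw [hβα] at h
      linarith
    have hAval' : ∀ s i, μ (A s i) = ENNReal.ofReal ((1 + α) / 2) := by
      intro s i
      rw [hAval s i, ← ENNReal.ofReal_add hβ0 hα0]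
      congr 1
      rw [hβα]; ring
    have hhalf : (0:ℝ) ≤ (1 + α) / 2 := by linarith
    rw [hI]
    have hterm : ∀ s : Fin N → Bool, (μ (Es s)).toReal = ((1 + α) / 2) ^ N := by
      intro s
      rw [hprod s]
      simp only [hAval']
      rw [Finset.prod_const, Finset.card_univ, Fintype.card_fin,
        ← ENNReal.ofReal_pow hhalf, ENNReal.toReal_ofReal (by positivity)]
    rw [Finset.sum_congr rfl (fun s _ => hterm s), Finset.sum_const, Finset.card_univ]
    have hcard2 : Fintype.card (Fin N → Bool) = 2 ^ N := by
      simp [Fintype.card_fun]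
    rw [hcard2, nsmul_eq_mul]
    push_cast
    rw [← mul_pow]
    congr 1
    ring
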